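/- Let q be a prime power, f ∈ F_q[x] a monic irreducible polynomial of degree d, K = F_q[x]/⟨f⟩, and b, t positive integers. Then the number of tuples (U_1, V_1, ..., U_t, V_t) with U_k ∈ F_q^{b×d}, V_k ∈ F_q^{d×b} such that the sequence Σ_{k=1}^t U_k·C̄_f·V_k is the zero sequence equals the number of tuples (u_1, v_1, ..., u_t, v_t) with u_k, v_k ∈ K^b such that the b×b matrix Σ_{k=1}^t u_k v_k^T over K is the zero matrix. -/

import Mathlib

open Matrix Polynomial

/-- `p` annihilates the matrix sequence `S`, i.e. `p(S) = 0`: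
for every `k`, `∑ i, (coeff p i) • S (i + k) = 0`. -/
def AnnPoly {F : Type} [Field F] {α β : Type} (p : Polynomial F)
    (S : ℕ → Matrix α β F) : Prop :=
  ∀ k : ℕ, (p.sum fun i a => a • S (i + k)) = 0

open scoped Classical in
/-- The minimal generating polynomial of a matrix sequence: the unique monic
polynomial annihilating `S` that divides every annihilator of `S`
(`0` if no such polynomial exists). -/
noncomputable def seqMinpoly {F : Type} [Field F] {α β : Type}
    (S : ℕ → Matrix α β F) : Polynomial F :=
  if h : ∃ p : Polynomial F, p.Monic ∧ AnnPoly p S ∧ ∀ g : Polynomial F, AnnPoly g S → p ∣ g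
  then h.choose else 0

/-- The companion matrix of a monic polynomial `f` of degree `d`:
ones on the subdiagonal, last column `(-f_0, …, -f_{d-1})ᵀ`. -/
def companion {F : Type} [Field F] (d : ℕ) (f : Polynomial F) :
    Matrix (Fin d) (Fin d) F :=
  Matrix.of fun i j => (if (i : ℕ) = (j : ℕ) + 1 then 1 else 0) +
    (if (j : ℕ) = d - 1 then -f.coeff (i : ℕ) else 0)


namespace S11
variable {F : Type} [Field F] {f : Polynomial F}

noncomputable def bK (hm : f.Monic) {d : ℕ} (hd : d = f.natDegree) :
    Module.Basis (Fin d) F (AdjoinRoot f) :=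
  (AdjoinRoot.powerBasis' hm).basis.reindex (finCongr (by rw [AdjoinRoot.powerBasis'_dim, hd]))

lemma bK_apply (hm : f.Monic) {d : ℕ} (hd : d = f.natDegree) (i : Fin d) :
    bK hm hd i = AdjoinRoot.root f ^ (i : ℕ) := by
  rw [bK, Module.Basis.reindex_apply, PowerBasis.basis_eq_pow]
  simp [AdjoinRoot.powerBasis'_gen]

lemma root_pow_d (hm : f.Monic) {d : ℕ} (hd : d = f.natDegree) :
    AdjoinRoot.root f ^ d = -∑ m : Fin d, f.coeff (m : ℕ) • AdjoinRoot.root f ^ (m : ℕ) := by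
  have h0 : (aeval (AdjoinRoot.root f)) f = 0 := by
    rw [AdjoinRoot.aeval_eq, AdjoinRoot.mk_self]
  rw [aeval_eq_sum_range, ← hd, Finset.sum_range_succ] at h0
  rw [Fin.sum_univ_eq_sum_range (fun m => f.coeff m • AdjoinRoot.root f ^ m) d]
  have hc : f.coeff d = 1 := by rw [hd]; exact hm.coeff_natDegree
  rw [hc, one_smul] at h0
  linear_combination h0

lemma key (hm : f.Monic) {d : ℕ} (hd : d = f.natDegree) (p : AdjoinRoot f) :
    (bK hm hd).equivFun (AdjoinRoot.root f * p) =
      (companion d f).mulVec ((bK hm hd).equivFun p) := by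
  set b := bK hm hd with hb
  suffices h : b.equivFun.toLinearMap ∘ₗ (LinearMap.mulLeft F (AdjoinRoot.root f)) =
      (Matrix.mulVecLin (companion d f)) ∘ₗ b.equivFun.toLinearMap by
    exact congrArg (fun L => L p) h
  apply Module.Basis.ext b
  intro j
  have hdpos : 0 < d := j.pos
  simp only [LinearMap.comp_apply, LinearMap.mulLeft_apply, LinearEquiv.coe_coe,
    Matrix.mulVecLin_apply]
  have hsingle : ∀ m : Fin d, b.equivFun (b m) = Pi.single m 1 := by
    intro m; funext i; rw [Module.Basis.equivFun_self, Pi.single_apply]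
    simp [eq_comm]
  rw [hsingle j, Matrix.mulVec_single_one]
  funext i
  have hexp : ∀ m : Fin d, b.equivFun (AdjoinRoot.root f ^ (m : ℕ)) = Pi.single m (1:F) := by
    intro m; rw [← bK_apply hm hd m, ← hb, hsingle]
  by_cases hj : (j : ℕ) = d - 1
  · have hj1 : (j : ℕ) + 1 = d := by omega
    rw [hb, bK_apply, ← pow_succ', hj1, root_pow_d hm hd, map_neg, map_sum]
    simp only [_root_.map_smul, ← hb, hexp]
    simp only [Pi.neg_apply, Finset.sum_apply, Pi.smul_apply, Pi.single_apply, smul_eq_mul,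
      mul_ite, mul_one, mul_zero]
    simp only [Finset.sum_ite_eq, Finset.mem_univ, if_true]
    simp [companion, hj]
    omega
  · have hj1 : (j : ℕ) + 1 < d := by omega
    rw [hb, bK_apply, ← pow_succ']
    have h2 : AdjoinRoot.root f ^ ((j : ℕ) + 1) = b ⟨(j:ℕ)+1, hj1⟩ := by
      rw [hb, bK_apply]
    rw [h2, hsingle]
    simp [companion, hj, Fin.ext_iff, Pi.single_apply]

end S11

namespace S11b
open S11

variable {F : Type} [Field F] {f : Polynomial F}

lemma key_pow (hm : f.Monic) {d : ℕ} (hd : d = f.natDegree) (k : ℕ) (p : AdjoinRoot f) :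
    (bK hm hd).equivFun (AdjoinRoot.root f ^ k * p) =
      ((companion d f) ^ k).mulVec ((bK hm hd).equivFun p) := by
  induction k with
  | zero => simp
  | succ n ih =>
    rw [pow_succ', mul_assoc, key hm hd, ih, pow_succ', ← Matrix.mulVec_mulVec]

/-- the linear functional: top coefficient -/
noncomputable def lam (hm : f.Monic) {d : ℕ} (hd : d = f.natDegree) (hd0 : 0 < d) :
    AdjoinRoot f →ₗ[F] F :=
  (LinearMap.proj (⟨d - 1, by omega⟩ : Fin d)) ∘ₗ ((bK hm hd).equivFun : AdjoinRoot f →ₗ[F] (Fin d → F))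

/-- lam of a product, expanded over the basis of the second factor -/
lemma lam_mul (hm : f.Monic) {d : ℕ} (hd : d = f.natDegree) (hd0 : 0 < d)
    (a c : AdjoinRoot f) :
    lam hm hd hd0 (a * c) =
      ∑ m : Fin d, (bK hm hd).equivFun c m * lam hm hd hd0 (a * AdjoinRoot.root f ^ (m : ℕ)) := by
  conv_lhs => rw [← Module.Basis.sum_equivFun (bK hm hd) c]
  rw [Finset.mul_sum, map_sum]
  congr 1; funext m
  rw [mul_smul_comm, _root_.map_smul, bK_apply, smul_eq_mul]

lemma lam_basis_top (hm : f.Monic) {d : ℕ} (hd : d = f.natDegree) (hd0 : 0 < d) :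
    lam hm hd hd0 (AdjoinRoot.root f ^ (d - 1)) = 1 := by
  have : AdjoinRoot.root f ^ (d - 1) = bK hm hd ⟨d - 1, by omega⟩ := by rw [bK_apply]
  rw [lam, this]
  simp only [LinearMap.comp_apply, LinearEquiv.coe_coe, LinearMap.proj_apply]
  rw [Module.Basis.equivFun_self]
  simp

lemma lam_root_zero (hm : f.Monic) (hirr : Irreducible f) {d : ℕ} (hd : d = f.natDegree)
    (hd0 : 0 < d)
    (a : AdjoinRoot f) (h : ∀ m : Fin d, lam hm hd hd0 (a * AdjoinRoot.root f ^ (m : ℕ)) = 0) :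
    a = 0 := by
  haveI := Fact.mk hirr
  by_contra ha
  have hc : ∀ c : AdjoinRoot f, lam hm hd hd0 (a * c) = 0 := by
    intro c
    rw [lam_mul hm hd hd0]
    simp [h]
  have h1 := hc (a⁻¹ * AdjoinRoot.root f ^ (d - 1))
  rw [← mul_assoc, mul_inv_cancel₀ ha, one_mul, lam_basis_top hm hd hd0] at h1
  exact one_ne_zero h1

noncomputable def Phi (hm : f.Monic) {d : ℕ} (hd : d = f.natDegree) (hd0 : 0 < d) :
    AdjoinRoot f →ₗ[F] (Fin d → F) :=
  LinearMap.pi fun m : Fin d =>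
    (lam hm hd hd0) ∘ₗ (LinearMap.mulRight F (AdjoinRoot.root f ^ (m : ℕ)))

lemma Phi_apply (hm : f.Monic) {d : ℕ} (hd : d = f.natDegree) (hd0 : 0 < d)
    (a : AdjoinRoot f) (m : Fin d) :
    Phi hm hd hd0 a m = lam hm hd hd0 (a * AdjoinRoot.root f ^ (m : ℕ)) := rfl

lemma lam_eq_dot (hm : f.Monic) {d : ℕ} (hd : d = f.natDegree) (hd0 : 0 < d)
    (a c : AdjoinRoot f) :
    lam hm hd hd0 (a * c) = Phi hm hd hd0 a ⬝ᵥ (bK hm hd).equivFun c := by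
  rw [lam_mul hm hd hd0, dotProduct]
  congr 1; funext m
  rw [Phi_apply, mul_comm]

lemma Phi_injective (hm : f.Monic) (hirr : Irreducible f) {d : ℕ} (hd : d = f.natDegree)
    (hd0 : 0 < d) : Function.Injective (Phi hm hd hd0) := by
  rw [injective_iff_map_eq_zero]
  intro a ha
  refine lam_root_zero hm hirr hd hd0 a fun m => ?_
  rw [← Phi_apply hm hd hd0, ha]
  rfl

noncomputable def PhiEq (hm : f.Monic) (hirr : Irreducible f) {d : ℕ} (hd : d = f.natDegree)
    (hd0 : 0 < d) : AdjoinRoot f ≃ₗ[F] (Fin d → F) := by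
  haveI : Module.Finite F (AdjoinRoot f) := Module.Finite.of_basis (bK hm hd)
  exact LinearMap.linearEquivOfInjective (Phi hm hd hd0) (Phi_injective hm hirr hd hd0)
    (by rw [Module.finrank_eq_card_basis (bK hm hd)]; simp)

lemma PhiEq_apply (hm : f.Monic) (hirr : Irreducible f) {d : ℕ} (hd : d = f.natDegree)
    (hd0 : 0 < d) (a : AdjoinRoot f) : PhiEq hm hirr hd hd0 a = Phi hm hd hd0 a := by
  rfl
end S11b


/-- The number of tuples `(U₁, V₁, …, U_t, V_t)` over `F_q` for which the sequence
`∑ₖ Uₖ·C̄_f·Vₖ` is zero equals the number of tuples `(u₁, v₁, …, u_t, v_t)` of vectors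
over `K = F_q[x]/⟨f⟩` for which the sum of outer products `∑ₖ uₖ vₖᵀ` is zero. -/
theorem stmt11 (F : Type) [Field F] [Fintype F] (b t : ℕ) (hb : 0 < b) (ht : 0 < t)
    (f : Polynomial F) (hmonic : f.Monic) (hirr : Irreducible f)
    (d : ℕ) (hd : d = f.natDegree) :
    Nat.card {W : Fin t → Matrix (Fin b) (Fin d) F × Matrix (Fin d) (Fin b) F //
        ∀ k : ℕ, ∑ i : Fin t, (W i).1 * (companion d f) ^ k * (W i).2 = 0} =
      Nat.card {w : Fin t → (Fin b → AdjoinRoot f) × (Fin b → AdjoinRoot f) //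
        ∑ i : Fin t, Matrix.vecMulVec (w i).1 (w i).2 = 0} := by
  classical
  have hd0 : 0 < d := hd ▸ hirr.natDegree_pos
  set K := AdjoinRoot f with hK
  let e := (S11.bK hmonic hd).equivFun
  let Ph := S11b.PhiEq hmonic hirr hd hd0
  let EU : Matrix (Fin b) (Fin d) F ≃ (Fin b → K) :=
    { toFun := fun U r => Ph.symm (U r)
      invFun := fun u => Matrix.of fun r m => Ph (u r) m
      left_inv := fun U => by funext r m; simp [Matrix.of_apply]
      right_inv := fun u => by funext r; exact Ph.symm_apply_apply (u r) }
  let EV : Matrix (Fin d) (Fin b) F ≃ (Fin b → K) :=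
    { toFun := fun V s => e.symm (fun m => V m s)
      invFun := fun v => Matrix.of fun m s => e (v s) m
      left_inv := fun V => by funext m s; simp [Matrix.of_apply]
      right_inv := fun v => by funext s; exact e.symm_apply_apply (v s) }
  let G : (Fin t → Matrix (Fin b) (Fin d) F × Matrix (Fin d) (Fin b) F) ≃
      (Fin t → (Fin b → K) × (Fin b → K)) :=
    Equiv.piCongrRight fun _ => Equiv.prodCongr EU EV
  refine Nat.card_congr (G.subtypeEquiv fun W => ?_)
  show _ ↔ (∑ i : Fin t, Matrix.vecMulVec (EU ((W i).1)) (EV ((W i).2)) = 0)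
  have hentry : ∀ (U : Matrix (Fin b) (Fin d) F) (V : Matrix (Fin d) (Fin b) F) (k : ℕ)
      (r s : Fin b),
      (U * companion d f ^ k * V) r s =
        S11b.lam hmonic hd hd0 (EU U r * (AdjoinRoot.root f ^ k * EV V s)) := by
    intro U V k r s
    have hcol : (fun m => V m s) = e (EV V s) :=
      (e.apply_symm_apply fun m => V m s).symm
    have h1 : ∀ m, (companion d f ^ k * V) m s =
        e (AdjoinRoot.root f ^ k * EV V s) m := by
      intro m
      rw [show e (AdjoinRoot.root f ^ k * EV V s) =
        ((companion d f) ^ k).mulVec (e (EV V s)) from S11b.key_pow hmonic hd k _, ← hcol]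
      simp [Matrix.mul_apply, Matrix.mulVec, dotProduct]
    have hU : U r = S11b.Phi hmonic hd hd0 (EU U r) := by
      have : Ph (Ph.symm (U r)) = U r := Ph.apply_symm_apply _
      rw [← this, S11b.PhiEq_apply]; rfl
    calc (U * companion d f ^ k * V) r s
        = ∑ m, U r m * (companion d f ^ k * V) m s := by
          rw [Matrix.mul_assoc, Matrix.mul_apply]
      _ = (U r) ⬝ᵥ e (AdjoinRoot.root f ^ k * EV V s) := by
          simp only [h1]
          rfl
      _ = S11b.Phi hmonic hd hd0 (EU U r) ⬝ᵥ
            (S11.bK hmonic hd).equivFun (AdjoinRoot.root f ^ k * EV V s) := by rw [← hU]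
      _ = S11b.lam hmonic hd hd0 (EU U r * (AdjoinRoot.root f ^ k * EV V s)) :=
          (S11b.lam_eq_dot hmonic hd hd0 _ _).symm
  have hsum : ∀ (k : ℕ) (r s : Fin b),
      ∑ i : Fin t, S11b.lam hmonic hd hd0 (EU ((W i).1) r *
          (AdjoinRoot.root f ^ k * EV ((W i).2) s)) =
        S11b.lam hmonic hd hd0
          ((∑ i : Fin t, EU ((W i).1) r * EV ((W i).2) s) * AdjoinRoot.root f ^ k) := by
    intro k r s
    rw [← map_sum, Finset.sum_mul]
    congr 1
    exact Finset.sum_congr rfl fun i _ => by ring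
  constructor
  · intro hA
    ext r s
    simp only [Matrix.sum_apply, Matrix.vecMulVec_apply, Matrix.zero_apply]
    refine S11b.lam_root_zero hmonic hirr hd hd0 _ fun m => ?_
    rw [← hsum]
    have h0 := congrFun (congrFun (hA (m : ℕ)) r) s
    rw [Matrix.sum_apply] at h0
    simp only [hentry] at h0
    simpa using h0
  · intro hB k
    ext r s
    rw [Matrix.sum_apply]
    simp only [hentry, Matrix.zero_apply]
    rw [hsum]
    have hS : (∑ i : Fin t, EU ((W i).1) r * EV ((W i).2) s) = 0 := by
      have h0 := congrFun (congrFun hB r) s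
      rw [Matrix.sum_apply] at h0
      simpa [Matrix.vecMulVec_apply] using h0
    rw [hS, zero_mul, map_zero]
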